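/- For any n ≥ 2 and any transitive system (X,T), broken F-n-sensitivity for any Furstenberg family F with {ℕ} ⊆ F ⊆ F_ps is equivalent to blockily thickly n-sensitivity. In particular, broken F_ps-n-sensitivity implies broken {ℕ}-n-sensitivity. -/
import Mathlib


open Filter Topology MeasureTheory

variable {X : Type} [MetricSpace X]

def orbit (T : X → X) (x : X) : Set X := Set.range fun n : ℕ => T^[n] x

def IsTransitiveSys (T : X → X) : Prop :=
  ∀ U V : Set X, IsOpen U → U.Nonempty → IsOpen V → V.Nonempty →
    {n : ℕ | (U ∩ T^[n] ⁻¹' V).Nonempty}.Infinite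

def MinimalPoint (T : X → X) (x : X) : Prop :=
  ∀ y ∈ closure (orbit T x), x ∈ closure (orbit T y)

def MinimalSys (T : X → X) : Prop := ∀ x : X, Dense (orbit T x)

def IsMinimalSubset (T : X → X) (M : Set X) : Prop :=
  M.Nonempty ∧ IsClosed M ∧ Set.MapsTo T M M ∧
    ∀ M' ⊆ M, M'.Nonempty → IsClosed M' → Set.MapsTo T M' M' → M' = M

noncomputable def ubd (F : Set ℕ) : ℝ :=
  Filter.limsup (fun N : ℕ => ⨆ m : ℕ, ((F ∩ Set.Ico m (m + N)).ncard : ℝ) / N) atTop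

noncomputable def lbd (F : Set ℕ) : ℝ :=
  Filter.liminf (fun N : ℕ => ⨅ m : ℕ, ((F ∩ Set.Ico m (m + N)).ncard : ℝ) / N) atTop

def Syndetic (F : Set ℕ) : Prop := ∃ N : ℕ, ∀ k : ℕ, ∃ j ∈ F, k ≤ j ∧ j ≤ k + N

def Thick (F : Set ℕ) : Prop := ∀ l : ℕ, ∃ m : ℕ, Set.Icc m (m + l) ⊆ F

def PiecewiseSyndetic (F : Set ℕ) : Prop := ∃ A B : Set ℕ, Thick A ∧ Syndetic B ∧ F = A ∩ B

def Fps : Set (Set ℕ) := {F | PiecewiseSyndetic F}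
def Fpubd : Set (Set ℕ) := {F | 0 < ubd F}
def Finf : Set (Set ℕ) := {F | F.Infinite}

def FursFamily (S : Set (Set ℕ)) : Prop := ∀ F₁ F₂ : Set ℕ, F₁ ⊆ F₂ → F₁ ∈ S → F₂ ∈ S

def FamRecurrent {Z : Type} [MetricSpace Z] (S : Set (Set ℕ)) (T : Z → Z) (x : Z) : Prop :=
  ∀ U : Set Z, IsOpen U → x ∈ U → {n : ℕ | T^[n] x ∈ U} ∈ S

def BrokenSensitive (T : X → X) (S : Set (Set ℕ)) (n : ℕ) : Prop :=
  ∃ δ > (0:ℝ), ∃ F₀ ∈ S, ∀ U : Set X, IsOpen U → U.Nonempty → ∀ l : ℕ,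
    ∃ x : Fin n → X, (∀ i, x i ∈ U) ∧ ∃ m : ℕ,
      ∀ k ∈ F₀ ∩ Set.Icc 1 l, ∀ i j : Fin n, i ≠ j →
        δ < dist (T^[m + k] (x i)) (T^[m + k] (x j))

def SensitiveTuple (T : X → X) {n : ℕ} (x : Fin n → X) : Prop :=
  ∀ U : Set X, IsOpen U → U.Nonempty →
    ∀ V : Fin n → Set X, (∀ i, IsOpen (V i) ∧ x i ∈ V i) →
      ∃ y : Fin n → X, (∀ i, y i ∈ U) ∧ ∃ m : ℕ, ∀ i, T^[m] (y i) ∈ V i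

def EssentialSensitiveTuple (T : X → X) {n : ℕ} (x : Fin n → X) : Prop :=
  Function.Injective x ∧ SensitiveTuple T x

def prodMap (T : X → X) (n : ℕ) : (Fin n → X) → Fin n → X := fun x i => T (x i)

def BlockilyThickly (T : X → X) (n : ℕ) : Prop :=
  ∃ δ > (0:ℝ), ∀ k : ℕ, ∀ U : Set X, IsOpen U → U.Nonempty →
    ∃ x : Fin n → X, (∀ i, x i ∈ U) ∧ ∃ m : ℕ, ∀ l ≤ k, ∀ i j : Fin n, i ≠ j →
      δ < dist (T^[m + l] (x i)) (T^[m + l] (x j))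

def WeaklyMixing (T : X → X) : Prop :=
  IsTransitiveSys (fun p : X × X => (T p.1, T p.2))

def TopologicallyErgodic (T : X → X) : Prop :=
  ∀ U V : Set X, IsOpen U → U.Nonempty → IsOpen V → V.Nonempty →
    Syndetic {m : ℕ | (T^[m] ⁻¹' U ∩ V).Nonempty}

def MeanEquicontinuous (T : X → X) : Prop :=
  ∀ ε > (0:ℝ), ∃ δ > (0:ℝ), ∀ x y : X, dist x y < δ →
    Filter.limsup (fun m : ℕ => (∑ k ∈ Finset.range m, dist (T^[k] x) (T^[k] y)) / m) atTop < ε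

def BanachProximal (T : X → X) (x y : X) : Prop :=
  ∀ ε > (0:ℝ), ubd {m : ℕ | ε ≤ dist (T^[m] x) (T^[m] y)} = 0

def EquicontinuousSys (T : X → X) : Prop :=
  ∀ ε > (0:ℝ), ∃ δ > (0:ℝ), ∀ x y : X, dist x y < δ → ∀ n : ℕ, dist (T^[n] x) (T^[n] y) < ε

noncomputable def measSupp {Z : Type} [MetricSpace Z] [MeasurableSpace Z] (T : Z → Z) : Set Z :=
  closure (⋃ μ ∈ {μ : Measure Z | IsProbabilityMeasure μ ∧
      ∀ s : Set Z, MeasurableSet s → μ (T ⁻¹' s) = μ s},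
    {x : Z | ∀ U : Set Z, IsOpen U → x ∈ U → 0 < μ U})

private lemma uc_lemma [CompactSpace X] {T : X → X} (hT : Continuous T) (N : ℕ) {ε : ℝ}
    (hε : 0 < ε) :
    ∃ δ > (0:ℝ), ∀ s ≤ N, ∀ a b : X, dist a b < δ → dist (T^[s] a) (T^[s] b) < ε := by
  induction N with
  | zero =>
    refine ⟨ε, hε, fun s hs a b h => ?_⟩
    interval_cases s
    simpa using h
  | succ N ih =>
    obtain ⟨δ₁, hδ₁, h1⟩ := ih
    have hc : Continuous (T^[N+1]) := hT.iterate (N+1)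
    have huc : UniformContinuous (T^[N+1]) := CompactSpace.uniformContinuous_of_continuous hc
    obtain ⟨δ₂, hδ₂, h2⟩ := Metric.uniformContinuous_iff.mp huc ε hε
    refine ⟨min δ₁ δ₂, lt_min hδ₁ hδ₂, fun s hs a b h => ?_⟩
    rcases Nat.lt_succ_iff_lt_or_eq.mp (Nat.lt_succ_of_le hs) with hs' | rfl
    · exact h1 s (Nat.lt_succ_iff.mp hs') a b (lt_of_lt_of_le h (min_le_left _ _))
    · exact h2 (lt_of_lt_of_le h (min_le_right _ _))

private lemma brokenToBT [CompactSpace X] {T : X → X} (hT : Continuous T) {n : ℕ}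
    {S : Set (Set ℕ)} (hsub : S ⊆ Fps) (h : BrokenSensitive T S n) :
    BlockilyThickly T n := by
  obtain ⟨δ, hδ, F₀, hF₀S, H⟩ := h
  obtain ⟨A, B, hA, ⟨N, hB⟩, rfl⟩ := hsub hF₀S
  obtain ⟨δ'', hδ'', huc⟩ := uc_lemma hT N hδ
  refine ⟨δ''/2, by linarith, fun k U hU hUne => ?_⟩
  obtain ⟨m₀, hm₀⟩ := hA (k + N + 1)
  set m₁ := m₀ + 1 with hm₁
  set L := m₁ + k + N with hL
  obtain ⟨x, hx, m, hsep⟩ := H U hU hUne L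
  refine ⟨x, hx, m + m₁, fun l hl i j hij => ?_⟩
  obtain ⟨jb, hjbB, hjb1, hjb2⟩ := hB (m₁ + l)
  have hjbA : jb ∈ A := hm₀ ⟨by omega, by omega⟩
  have hjbF : jb ∈ (A ∩ B) ∩ Set.Icc 1 L := ⟨⟨hjbA, hjbB⟩, by omega, by omega⟩
  have hd := hsep jb hjbF i j hij
  set s := jb - (m₁ + l) with hs
  have hsN : s ≤ N := by omega
  have hiter : ∀ y : X, T^[m + jb] y = T^[s] (T^[m + m₁ + l] y) := by
    intro y
    rw [← Function.iterate_add_apply]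
    congr 1
    omega
  by_contra hcon
  push_neg at hcon
  have : dist (T^[m + m₁ + l] (x i)) (T^[m + m₁ + l] (x j)) < δ'' := by linarith
  have := huc s hsN _ _ this
  rw [← hiter, ← hiter] at this
  linarith

private lemma btToBroken {T : X → X} {n : ℕ} {S : Set (Set ℕ)}
    (hN : {m : ℕ | 1 ≤ m} ∈ S) (h : BlockilyThickly T n) : BrokenSensitive T S n := by
  obtain ⟨δ, hδ, H⟩ := h
  refine ⟨δ, hδ, {m : ℕ | 1 ≤ m}, hN, fun U hU hUne l => ?_⟩
  obtain ⟨x, hx, m, hsep⟩ := H l U hU hUne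
  exact ⟨x, hx, m, fun k hk i j hij => hsep k hk.2.2 i j hij⟩

theorem stmt6 [CompactSpace X] (T : X → X) (hT : Continuous T) (hTs : Function.Surjective T)
    (htr : IsTransitiveSys T) (n : ℕ) (hn : 2 ≤ n)
    (S : Set (Set ℕ)) (hfam : FursFamily S) (hN : {m : ℕ | 1 ≤ m} ∈ S) (hsub : S ⊆ Fps) :
    (BrokenSensitive T S n ↔ BlockilyThickly T n) ∧
      (BrokenSensitive T Fps n →
        BrokenSensitive T ({({m : ℕ | 1 ≤ m})} : Set (Set ℕ)) n) := by
  constructor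
  · exact ⟨fun h => brokenToBT hT hsub h, fun h => btToBroken hN h⟩
  · intro h
    exact btToBroken (Set.mem_singleton _) (brokenToBT hT (fun F hF => hF) h)
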